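/- Let R, L, G, C, ℓ be positive reals, T > 0, and let v, i : [0, T] × [0, ℓ] → ℝ be twice continuously differentiable functions satisfying C ∂_t v + ∂_x i + G v = 0 and L ∂_t i + ∂_x v + R i = 0 on [0, T] × [0, ℓ], with boundary conditions v(t, 0) = 0 and v(t, ℓ) = 0 for all t ∈ [0, T]. Then with μ = min(R/L, G/C), the enhanced Lyapunov function V₁(t) = (1/2) ∫₀^ℓ (C v² + L i²) dx + (1/2) ∫₀^ℓ (C (∂_x v)² + L (∂_x i)²) dx satisfies V₁(t) ≤ V₁(0) · exp(−2 μ t) for all t ∈ [0, T]. -/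

import Mathlib

open MeasureTheory intervalIntegral


open MeasureTheory intervalIntegral Set

namespace TelAux

/-- partial derivative in the first variable -/
noncomputable def pt (F : ℝ → ℝ → ℝ) (t x : ℝ) : ℝ :=
  fderiv ℝ (fun p : ℝ × ℝ => F p.1 p.2) (t, x) (1, 0)

/-- partial derivative in the second variable -/
noncomputable def px (F : ℝ → ℝ → ℝ) (t x : ℝ) : ℝ :=
  fderiv ℝ (fun p : ℝ × ℝ => F p.1 p.2) (t, x) (0, 1)

variable {F : ℝ → ℝ → ℝ}

lemma hasDerivAt_fst (hF : ContDiff ℝ 1 fun p : ℝ × ℝ => F p.1 p.2) (t x : ℝ) :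
    HasDerivAt (fun τ => F τ x) (pt F t x) t := by
  have h1 : HasDerivAt (fun τ : ℝ => ((τ, x) : ℝ × ℝ)) ((1 : ℝ), (0 : ℝ)) t :=
    (hasDerivAt_id t).prodMk (hasDerivAt_const t x)
  exact (hF.differentiable one_ne_zero (t, x)).hasFDerivAt.comp_hasDerivAt t h1

lemma hasDerivAt_snd (hF : ContDiff ℝ 1 fun p : ℝ × ℝ => F p.1 p.2) (t x : ℝ) :
    HasDerivAt (fun y => F t y) (px F t x) x := by
  have h1 : HasDerivAt (fun y : ℝ => ((t, y) : ℝ × ℝ)) ((0 : ℝ), (1 : ℝ)) x :=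
    (hasDerivAt_const x t).prodMk (hasDerivAt_id x)
  exact (hF.differentiable one_ne_zero (t, x)).hasFDerivAt.comp_hasDerivAt x h1

lemma deriv_fst (hF : ContDiff ℝ 1 fun p : ℝ × ℝ => F p.1 p.2) (t x : ℝ) :
    deriv (fun τ => F τ x) t = pt F t x := (hasDerivAt_fst hF t x).deriv

lemma deriv_snd (hF : ContDiff ℝ 1 fun p : ℝ × ℝ => F p.1 p.2) (t x : ℝ) :
    deriv (fun y => F t y) x = px F t x := (hasDerivAt_snd hF t x).deriv

lemma continuous_pt (hF : ContDiff ℝ 1 fun p : ℝ × ℝ => F p.1 p.2) :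
    Continuous fun p : ℝ × ℝ => pt F p.1 p.2 :=
  (hF.continuous_fderiv one_ne_zero).clm_apply continuous_const

lemma continuous_px (hF : ContDiff ℝ 1 fun p : ℝ × ℝ => F p.1 p.2) :
    Continuous fun p : ℝ × ℝ => px F p.1 p.2 :=
  (hF.continuous_fderiv one_ne_zero).clm_apply continuous_const

lemma contDiff_pt (hF : ContDiff ℝ 2 fun p : ℝ × ℝ => F p.1 p.2) :
    ContDiff ℝ 1 fun p : ℝ × ℝ => pt F p.1 p.2 :=
  (hF.fderiv_right (m := 1) (by norm_num)).clm_apply contDiff_const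

lemma contDiff_px (hF : ContDiff ℝ 2 fun p : ℝ × ℝ => F p.1 p.2) :
    ContDiff ℝ 1 fun p : ℝ × ℝ => px F p.1 p.2 :=
  (hF.fderiv_right (m := 1) (by norm_num)).clm_apply contDiff_const

lemma mixed_symm (hF : ContDiff ℝ 2 fun p : ℝ × ℝ => F p.1 p.2) (t x : ℝ) :
    px (pt F) t x = pt (px F) t x := by
  set Fp : ℝ × ℝ → ℝ := fun p => F p.1 p.2 with hFp
  have hdf : ∀ y, HasFDerivAt Fp (fderiv ℝ Fp y) y := fun y =>
    (hF.differentiable two_ne_zero y).hasFDerivAt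
  have hf'cd : ContDiff ℝ 1 (fderiv ℝ Fp) := hF.fderiv_right (m := 1) (by norm_num)
  have hf'd : DifferentiableAt ℝ (fderiv ℝ Fp) (t, x) := (hf'cd.differentiable one_ne_zero) _
  have hsymm := second_derivative_symmetric hdf hf'd.hasFDerivAt
    ((1 : ℝ), (0 : ℝ)) ((0 : ℝ), (1 : ℝ))
  have h1 : px (pt F) t x =
      fderiv ℝ (fderiv ℝ Fp) (t, x) ((0 : ℝ), (1 : ℝ)) ((1 : ℝ), (0 : ℝ)) := by
    show fderiv ℝ (fun p : ℝ × ℝ => fderiv ℝ Fp p ((1 : ℝ), (0 : ℝ))) (t, x) ((0:ℝ), (1:ℝ)) = _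
    rw [fderiv_clm_apply hf'd (differentiableAt_const _)]
    simp
  have h2 : pt (px F) t x =
      fderiv ℝ (fderiv ℝ Fp) (t, x) ((1 : ℝ), (0 : ℝ)) ((0 : ℝ), (1 : ℝ)) := by
    show fderiv ℝ (fun p : ℝ × ℝ => fderiv ℝ Fp p ((0 : ℝ), (1 : ℝ))) (t, x) ((1:ℝ), (0:ℝ)) = _
    rw [fderiv_clm_apply hf'd (differentiableAt_const _)]
    simp
  rw [h1, h2, hsymm]

/-- differentiation under the interval integral -/
lemma hasDerivAt_integral {g : ℝ → ℝ → ℝ}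
    (hg : ContDiff ℝ 1 fun p : ℝ × ℝ => g p.1 p.2) (a b t₀ : ℝ) :
    HasDerivAt (fun t => ∫ x in a..b, g t x) (∫ x in a..b, pt g t₀ x) t₀ := by
  have hcont : Continuous fun p : ℝ × ℝ => g p.1 p.2 := hg.continuous
  have hcg : ∀ t, Continuous (g t) := fun t =>
    hcont.comp (continuous_const.prodMk continuous_id)
  have hcpt : Continuous fun p : ℝ × ℝ => pt g p.1 p.2 := continuous_pt hg
  set K : Set (ℝ × ℝ) := Icc (t₀ - 1) (t₀ + 1) ×ˢ uIcc a b with hK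
  have hKc : IsCompact K := (isCompact_Icc).prod isCompact_uIcc
  obtain ⟨M, hM⟩ := hKc.exists_bound_of_continuousOn hcpt.continuousOn
  have key := intervalIntegral.hasDerivAt_integral_of_dominated_loc_of_deriv_le
    (F := g) (F' := fun t x => pt g t x) (x₀ := t₀) (a := a) (b := b) (μ := volume)
    (bound := fun _ => M) (s := Metric.ball t₀ 1) (Metric.ball_mem_nhds t₀ one_pos)
    (Filter.Eventually.of_forall fun t => (hcg t).aestronglyMeasurable)
    ((hcg t₀).intervalIntegrable a b)
    ((hcpt.comp (continuous_const.prodMk continuous_id)).aestronglyMeasurable)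
    (Filter.Eventually.of_forall fun x hx => fun τ hτ => by
      have : (τ, x) ∈ K := by
        constructor
        · have := Metric.mem_ball.mp hτ
          rw [Real.dist_eq] at this
          constructor <;> [linarith [abs_lt.mp this |>.1]; linarith [abs_lt.mp this |>.2]]
        · exact uIoc_subset_uIcc hx
      simpa using hM _ this)
    (intervalIntegrable_const)
    (Filter.Eventually.of_forall fun x _ => fun τ _ => hasDerivAt_fst hg τ x)
  exact key.2

/-- x-derivative of a `C¹` function vanishing in `x` on `[0,ℓ]` vanishes on `[0,ℓ]`. -/
lemma px_eq_zero_of_eqOn {P : ℝ → ℝ → ℝ} (hP : ContDiff ℝ 1 fun p : ℝ × ℝ => P p.1 p.2)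
    {ℓ : ℝ} (hℓ : 0 < ℓ) (t : ℝ) (h0 : ∀ x ∈ Icc (0:ℝ) ℓ, P t x = 0) :
    ∀ x ∈ Icc (0:ℝ) ℓ, px P t x = 0 := by
  have hc : Continuous fun x => px P t x :=
    (continuous_px hP).comp (continuous_const.prodMk continuous_id)
  have hIoo : EqOn (fun x => px P t x) (fun _ => (0:ℝ)) (Ioo 0 ℓ) := by
    intro x hx
    have hev : (fun y => P t y) =ᶠ[nhds x] fun _ => (0:ℝ) :=
      Filter.eventuallyEq_of_mem (isOpen_Ioo.mem_nhds hx)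
        (fun y hy => h0 y (Ioo_subset_Icc_self hy))
    have : deriv (fun y => P t y) x = 0 := by rw [hev.deriv_eq]; simp
    simpa [← deriv_snd hP] using this
  have hcl := hIoo.closure hc continuous_const
  rw [closure_Ioo hℓ.ne] at hcl
  exact fun x hx => hcl hx

/-- t-derivative of a `C¹` function vanishing in `t` on `[0,T]` vanishes on `[0,T]`. -/
lemma pt_eq_zero_of_eqOn {P : ℝ → ℝ → ℝ} (hP : ContDiff ℝ 1 fun p : ℝ × ℝ => P p.1 p.2)
    {T : ℝ} (hT : 0 < T) (x : ℝ) (h0 : ∀ t ∈ Icc (0:ℝ) T, P t x = 0) :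
    ∀ t ∈ Icc (0:ℝ) T, pt P t x = 0 := by
  have hc : Continuous fun t => pt P t x :=
    (continuous_pt hP).comp (continuous_id.prodMk continuous_const)
  have hIoo : EqOn (fun t => pt P t x) (fun _ => (0:ℝ)) (Ioo 0 T) := by
    intro t ht
    have hev : (fun τ => P τ x) =ᶠ[nhds t] fun _ => (0:ℝ) :=
      Filter.eventuallyEq_of_mem (isOpen_Ioo.mem_nhds ht)
        (fun τ hτ => h0 τ (Ioo_subset_Icc_self hτ))
    have : deriv (fun τ => P τ x) t = 0 := by rw [hev.deriv_eq]; simp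
    simpa [← deriv_fst hP] using this
  have hcl := hIoo.closure hc continuous_const
  rw [closure_Ioo hT.ne] at hcl
  exact fun t ht => hcl ht

end TelAux

open TelAux

/-- Exponential decay of the enhanced Lyapunov function for the Telegrapher's equations:
if `v`, `i` are `C²`, satisfy `C ∂_t v + ∂_x i + G v = 0`, `L ∂_t i + ∂_x v + R i = 0` on
`[0,T] × [0,ℓ]` and `v(t,0) = v(t,ℓ) = 0`, then with `μ = min(R/L, G/C)` the enhanced
Lyapunov function `V₁(t) = (1/2)∫₀^ℓ (C v² + L i²) dx + (1/2)∫₀^ℓ (C (∂_x v)² + L (∂_x i)²) dx`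
satisfies `V₁(t) ≤ V₁(0)·exp(−2μt)` on `[0,T]`. -/
theorem telegrapher_enhanced_lyapunov_decay (R L G C ℓ T : ℝ)
    (hR : 0 < R) (hL : 0 < L) (hG : 0 < G) (hC : 0 < C) (hℓ : 0 < ℓ) (hT : 0 < T)
    (v i : ℝ → ℝ → ℝ)
    (hv : ContDiff ℝ 2 (fun p : ℝ × ℝ => v p.1 p.2))
    (hi : ContDiff ℝ 2 (fun p : ℝ × ℝ => i p.1 p.2))
    (hpde₁ : ∀ t ∈ Set.Icc 0 T, ∀ x ∈ Set.Icc 0 ℓ,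
      C * deriv (fun τ => v τ x) t + deriv (fun y => i t y) x + G * v t x = 0)
    (hpde₂ : ∀ t ∈ Set.Icc 0 T, ∀ x ∈ Set.Icc 0 ℓ,
      L * deriv (fun τ => i τ x) t + deriv (fun y => v t y) x + R * i t x = 0)
    (hbc0 : ∀ t ∈ Set.Icc 0 T, v t 0 = 0)
    (hbcℓ : ∀ t ∈ Set.Icc 0 T, v t ℓ = 0) :
    ∀ t ∈ Set.Icc 0 T,
      ((1 / 2) * (∫ x in (0:ℝ)..ℓ, (C * v t x ^ 2 + L * i t x ^ 2)) +
        (1 / 2) * (∫ x in (0:ℝ)..ℓ,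
          (C * (deriv (fun y => v t y) x) ^ 2 + L * (deriv (fun y => i t y) x) ^ 2))) ≤
      ((1 / 2) * (∫ x in (0:ℝ)..ℓ, (C * v 0 x ^ 2 + L * i 0 x ^ 2)) +
        (1 / 2) * (∫ x in (0:ℝ)..ℓ,
          (C * (deriv (fun y => v 0 y) x) ^ 2 + L * (deriv (fun y => i 0 y) x) ^ 2))) *
        Real.exp (-2 * min (R / L) (G / C) * t) := by
  have hv1 : ContDiff ℝ 1 (fun p : ℝ × ℝ => v p.1 p.2) := hv.of_le one_le_two
  have hi1 : ContDiff ℝ 1 (fun p : ℝ × ℝ => i p.1 p.2) := hi.of_le one_le_two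
  intro t ht
  simp only [deriv_snd hv1, deriv_snd hi1]
  set μ : ℝ := min (R / L) (G / C) with hμdef
  -- the Lyapunov function and its derivative
  set f : ℝ → ℝ := fun τ =>
      (1 / 2) * (∫ x in (0:ℝ)..ℓ, (C * v τ x ^ 2 + L * i τ x ^ 2)) +
      (1 / 2) * (∫ x in (0:ℝ)..ℓ, (C * (px v τ x) ^ 2 + L * (px i τ x) ^ 2)) with hfdef
  set D : ℝ → ℝ := fun τ =>
      (1 / 2) * (∫ x in (0:ℝ)..ℓ, pt (fun t x => C * v t x ^ 2 + L * i t x ^ 2) τ x) +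
      (1 / 2) * (∫ x in (0:ℝ)..ℓ,
        pt (fun t x => C * (px v t x) ^ 2 + L * (px i t x) ^ 2) τ x) with hDdef
  -- smoothness of the integrands
  have hg1 : ContDiff ℝ 1 fun p : ℝ × ℝ => C * v p.1 p.2 ^ 2 + L * i p.1 p.2 ^ 2 :=
    (contDiff_const.mul (hv1.pow 2)).add (contDiff_const.mul (hi1.pow 2))
  have hg2 : ContDiff ℝ 1 fun p : ℝ × ℝ => C * (px v p.1 p.2) ^ 2 + L * (px i p.1 p.2) ^ 2 :=
    (contDiff_const.mul ((contDiff_px hv).pow 2)).add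
      (contDiff_const.mul ((contDiff_px hi).pow 2))
  have hfd : ∀ τ, HasDerivAt f (D τ) τ := fun τ =>
    ((hasDerivAt_integral hg1 0 ℓ τ).const_mul (1 / 2)).add
      ((hasDerivAt_integral hg2 0 ℓ τ).const_mul (1 / 2))
  -- continuity helpers
  have cV : ∀ τ, Continuous fun x => v τ x := fun τ =>
    hv.continuous.comp (continuous_const.prodMk continuous_id)
  have cI : ∀ τ, Continuous fun x => i τ x := fun τ =>
    hi.continuous.comp (continuous_const.prodMk continuous_id)
  have cVx : ∀ τ, Continuous fun x => px v τ x := fun τ =>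
    (continuous_px hv1).comp (continuous_const.prodMk continuous_id)
  have cIx : ∀ τ, Continuous fun x => px i τ x := fun τ =>
    (continuous_px hi1).comp (continuous_const.prodMk continuous_id)
  have cVxx : ∀ τ, Continuous fun x => px (px v) τ x := fun τ =>
    (continuous_px (contDiff_px hv)).comp (continuous_const.prodMk continuous_id)
  have cIxx : ∀ τ, Continuous fun x => px (px i) τ x := fun τ =>
    (continuous_px (contDiff_px hi)).comp (continuous_const.prodMk continuous_id)
  -- PDEs in partial-derivative form
  have pde1 : ∀ t' ∈ Set.Icc (0:ℝ) T, ∀ x ∈ Set.Icc (0:ℝ) ℓ,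
      C * pt v t' x + px i t' x + G * v t' x = 0 := by
    intro t' ht' x hx
    have h := hpde₁ t' ht' x hx
    rwa [deriv_fst hv1, deriv_snd hi1] at h
  have pde2 : ∀ t' ∈ Set.Icc (0:ℝ) T, ∀ x ∈ Set.Icc (0:ℝ) ℓ,
      L * pt i t' x + px v t' x + R * i t' x = 0 := by
    intro t' ht' x hx
    have h := hpde₂ t' ht' x hx
    rwa [deriv_fst hi1, deriv_snd hv1] at h
  -- differentiated PDEs
  have hP1 : ContDiff ℝ 1 fun p : ℝ × ℝ =>
      C * pt v p.1 p.2 + px i p.1 p.2 + G * v p.1 p.2 :=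
    ((contDiff_const.mul (contDiff_pt hv)).add (contDiff_px hi)).add
      (contDiff_const.mul hv1)
  have hP2 : ContDiff ℝ 1 fun p : ℝ × ℝ =>
      L * pt i p.1 p.2 + px v p.1 p.2 + R * i p.1 p.2 :=
    ((contDiff_const.mul (contDiff_pt hi)).add (contDiff_px hv)).add
      (contDiff_const.mul hi1)
  have hdpde₁ : ∀ t' ∈ Set.Icc (0:ℝ) T, ∀ x ∈ Set.Icc (0:ℝ) ℓ,
      C * pt (px v) t' x + px (px i) t' x + G * px v t' x = 0 := by
    intro t' ht' x hx
    have hz := px_eq_zero_of_eqOn (P := fun t x => C * pt v t x + px i t x + G * v t x)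
      hP1 hℓ t' (fun y hy => pde1 t' ht' y hy) x hx
    have harith : HasDerivAt (fun y => C * pt v t' y + px i t' y + G * v t' y)
        (C * px (pt v) t' x + px (px i) t' x + G * px v t' x) x :=
      (((hasDerivAt_snd (contDiff_pt hv) t' x).const_mul C).add
        (hasDerivAt_snd (contDiff_px hi) t' x)).add
        ((hasDerivAt_snd hv1 t' x).const_mul G)
    have h2 := (hasDerivAt_snd (F := fun t x => C * pt v t x + px i t x + G * v t x)
      hP1 t' x).unique harith
    rw [mixed_symm hv t' x] at h2
    rw [← h2]; exact hz
  have hdpde₂ : ∀ t' ∈ Set.Icc (0:ℝ) T, ∀ x ∈ Set.Icc (0:ℝ) ℓ,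
      L * pt (px i) t' x + px (px v) t' x + R * px i t' x = 0 := by
    intro t' ht' x hx
    have hz := px_eq_zero_of_eqOn (P := fun t x => L * pt i t x + px v t x + R * i t x)
      hP2 hℓ t' (fun y hy => pde2 t' ht' y hy) x hx
    have harith : HasDerivAt (fun y => L * pt i t' y + px v t' y + R * i t' y)
        (L * px (pt i) t' x + px (px v) t' x + R * px i t' x) x :=
      (((hasDerivAt_snd (contDiff_pt hi) t' x).const_mul L).add
        (hasDerivAt_snd (contDiff_px hv) t' x)).add
        ((hasDerivAt_snd hi1 t' x).const_mul R)
    have h2 := (hasDerivAt_snd (F := fun t x => L * pt i t x + px v t x + R * i t x)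
      hP2 t' x).unique harith
    rw [mixed_symm hi t' x] at h2
    rw [← h2]; exact hz
  -- boundary values
  have hvt0 : ∀ t' ∈ Set.Icc (0:ℝ) T, pt v t' 0 = 0 := pt_eq_zero_of_eqOn hv1 hT 0 hbc0
  have hvtℓ : ∀ t' ∈ Set.Icc (0:ℝ) T, pt v t' ℓ = 0 := pt_eq_zero_of_eqOn hv1 hT ℓ hbcℓ
  have hix0 : ∀ t' ∈ Set.Icc (0:ℝ) T, px i t' 0 = 0 := by
    intro t' ht'
    have h := pde1 t' ht' 0 ⟨le_rfl, hℓ.le⟩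
    rw [hbc0 t' ht', hvt0 t' ht'] at h; linarith
  have hixℓ : ∀ t' ∈ Set.Icc (0:ℝ) T, px i t' ℓ = 0 := by
    intro t' ht'
    have h := pde1 t' ht' ℓ ⟨hℓ.le, le_rfl⟩
    rw [hbcℓ t' ht', hvtℓ t' ht'] at h; linarith
  -- pointwise time-derivative of the integrands
  have hptg1 : ∀ τ x, pt (fun t x => C * v t x ^ 2 + L * i t x ^ 2) τ x =
      2 * C * v τ x * pt v τ x + 2 * L * i τ x * pt i τ x := by
    intro τ x
    have h1 : HasDerivAt (fun t => C * v t x ^ 2 + L * i t x ^ 2)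
        (C * ((2 : ℕ) * v τ x ^ 1 * pt v τ x) + L * ((2 : ℕ) * i τ x ^ 1 * pt i τ x)) τ :=
      (((hasDerivAt_fst hv1 τ x).pow 2).const_mul C).add
        (((hasDerivAt_fst hi1 τ x).pow 2).const_mul L)
    have h2 := (hasDerivAt_fst (F := fun t x => C * v t x ^ 2 + L * i t x ^ 2)
      hg1 τ x).unique h1
    rw [h2]; push_cast; ring
  have hptg2 : ∀ τ x, pt (fun t x => C * (px v t x) ^ 2 + L * (px i t x) ^ 2) τ x =
      2 * C * px v τ x * pt (px v) τ x + 2 * L * px i τ x * pt (px i) τ x := by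
    intro τ x
    have h1 : HasDerivAt (fun t => C * (px v t x) ^ 2 + L * (px i t x) ^ 2)
        (C * ((2 : ℕ) * px v τ x ^ 1 * pt (px v) τ x) +
          L * ((2 : ℕ) * px i τ x ^ 1 * pt (px i) τ x)) τ :=
      (((hasDerivAt_fst (contDiff_px hv) τ x).pow 2).const_mul C).add
        (((hasDerivAt_fst (contDiff_px hi) τ x).pow 2).const_mul L)
    have h2 := (hasDerivAt_fst
      (F := fun t x => C * (px v t x) ^ 2 + L * (px i t x) ^ 2) hg2 τ x).unique h1
    rw [h2]; push_cast; ring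
  -- the two integral identities
  have key1 : ∀ τ ∈ Set.Icc (0:ℝ) T,
      (∫ x in (0:ℝ)..ℓ, pt (fun t x => C * v t x ^ 2 + L * i t x ^ 2) τ x) =
      -2 * ∫ x in (0:ℝ)..ℓ, (G * v τ x ^ 2 + R * i τ x ^ 2) := by
    intro τ hτ
    have hpw : Set.EqOn (fun x => pt (fun t x => C * v t x ^ 2 + L * i t x ^ 2) τ x)
        (fun x => (-2) * (px v τ x * i τ x + v τ x * px i τ x) +
          (-2) * (G * v τ x ^ 2 + R * i τ x ^ 2)) (Set.uIcc 0 ℓ) := by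
      intro x hx
      rw [Set.uIcc_of_le hℓ.le] at hx
      have h1 := pde1 τ hτ x hx
      have h2 := pde2 τ hτ x hx
      simp only [hptg1]
      linear_combination (2 * v τ x) * h1 + (2 * i τ x) * h2
    rw [intervalIntegral.integral_congr hpw]
    have hA : IntervalIntegrable
        (fun x => (-2 : ℝ) * (px v τ x * i τ x + v τ x * px i τ x)) volume 0 ℓ :=
      (continuous_const.mul (((cVx τ).mul (cI τ)).add ((cV τ).mul (cIx τ)))).intervalIntegrable 0 ℓ
    have hB : IntervalIntegrable
        (fun x => (-2 : ℝ) * (G * v τ x ^ 2 + R * i τ x ^ 2)) volume 0 ℓ :=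
      (continuous_const.mul ((continuous_const.mul ((cV τ).pow 2)).add
        (continuous_const.mul ((cI τ).pow 2)))).intervalIntegrable 0 ℓ
    rw [intervalIntegral.integral_add hA hB, intervalIntegral.integral_const_mul,
      intervalIntegral.integral_const_mul]
    have hFTC : (∫ x in (0:ℝ)..ℓ, (px v τ x * i τ x + v τ x * px i τ x)) =
        v τ ℓ * i τ ℓ - v τ 0 * i τ 0 :=
      intervalIntegral.integral_eq_sub_of_hasDerivAt
        (fun x _ => (hasDerivAt_snd hv1 τ x).mul (hasDerivAt_snd hi1 τ x))
        ((((cVx τ).mul (cI τ)).add ((cV τ).mul (cIx τ))).intervalIntegrable 0 ℓ)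
    rw [hFTC, hbc0 τ hτ, hbcℓ τ hτ]; ring
  have key2 : ∀ τ ∈ Set.Icc (0:ℝ) T,
      (∫ x in (0:ℝ)..ℓ, pt (fun t x => C * (px v t x) ^ 2 + L * (px i t x) ^ 2) τ x) =
      -2 * ∫ x in (0:ℝ)..ℓ, (G * (px v τ x) ^ 2 + R * (px i τ x) ^ 2) := by
    intro τ hτ
    have hpw : Set.EqOn
        (fun x => pt (fun t x => C * (px v t x) ^ 2 + L * (px i t x) ^ 2) τ x)
        (fun x => (-2) * (px (px v) τ x * px i τ x + px v τ x * px (px i) τ x) +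
          (-2) * (G * (px v τ x) ^ 2 + R * (px i τ x) ^ 2)) (Set.uIcc 0 ℓ) := by
      intro x hx
      rw [Set.uIcc_of_le hℓ.le] at hx
      have h1 := hdpde₁ τ hτ x hx
      have h2 := hdpde₂ τ hτ x hx
      simp only [hptg2]
      linear_combination (2 * px v τ x) * h1 + (2 * px i τ x) * h2
    rw [intervalIntegral.integral_congr hpw]
    have hA : IntervalIntegrable
        (fun x => (-2 : ℝ) * (px (px v) τ x * px i τ x + px v τ x * px (px i) τ x))
        volume 0 ℓ :=
      (continuous_const.mul (((cVxx τ).mul (cIx τ)).add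
        ((cVx τ).mul (cIxx τ)))).intervalIntegrable 0 ℓ
    have hB : IntervalIntegrable
        (fun x => (-2 : ℝ) * (G * (px v τ x) ^ 2 + R * (px i τ x) ^ 2)) volume 0 ℓ :=
      (continuous_const.mul ((continuous_const.mul ((cVx τ).pow 2)).add
        (continuous_const.mul ((cIx τ).pow 2)))).intervalIntegrable 0 ℓ
    rw [intervalIntegral.integral_add hA hB, intervalIntegral.integral_const_mul,
      intervalIntegral.integral_const_mul]
    have hFTC : (∫ x in (0:ℝ)..ℓ,
        (px (px v) τ x * px i τ x + px v τ x * px (px i) τ x)) =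
        px v τ ℓ * px i τ ℓ - px v τ 0 * px i τ 0 :=
      intervalIntegral.integral_eq_sub_of_hasDerivAt
        (fun x _ => (hasDerivAt_snd (contDiff_px hv) τ x).mul
          (hasDerivAt_snd (contDiff_px hi) τ x))
        ((((cVxx τ).mul (cIx τ)).add ((cVx τ).mul (cIxx τ))).intervalIntegrable 0 ℓ)
    rw [hFTC, hix0 τ hτ, hixℓ τ hτ]; ring
  -- the key differential inequality
  have hμC : μ * C ≤ G := by
    have h := min_le_right (R / L) (G / C)
    calc μ * C ≤ (G / C) * C := mul_le_mul_of_nonneg_right h hC.le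
    _ = G := div_mul_cancel₀ G hC.ne'
  have hμL : μ * L ≤ R := by
    have h := min_le_left (R / L) (G / C)
    calc μ * L ≤ (R / L) * L := mul_le_mul_of_nonneg_right h hL.le
    _ = R := div_mul_cancel₀ R hL.ne'
  have hKey : ∀ τ ∈ Set.Icc (0:ℝ) T, D τ + 2 * μ * f τ ≤ 0 := by
    intro τ hτ
    have hmono1 : μ * (∫ x in (0:ℝ)..ℓ, (C * v τ x ^ 2 + L * i τ x ^ 2)) ≤
        ∫ x in (0:ℝ)..ℓ, (G * v τ x ^ 2 + R * i τ x ^ 2) := by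
      rw [← intervalIntegral.integral_const_mul]
      apply intervalIntegral.integral_mono_on hℓ.le
        ((continuous_const.mul ((continuous_const.mul ((cV τ).pow 2)).add
          (continuous_const.mul ((cI τ).pow 2)))).intervalIntegrable 0 ℓ)
        (((continuous_const.mul ((cV τ).pow 2)).add
          (continuous_const.mul ((cI τ).pow 2))).intervalIntegrable 0 ℓ)
      intro x hx
      have h1 := mul_le_mul_of_nonneg_right hμC (sq_nonneg (v τ x))
      have h2 := mul_le_mul_of_nonneg_right hμL (sq_nonneg (i τ x))
      simp only [sq] at h1 h2
      show μ * (C * v τ x ^ 2 + L * i τ x ^ 2) ≤ G * v τ x ^ 2 + R * i τ x ^ 2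
      nlinarith [sq_nonneg (v τ x), sq_nonneg (i τ x)]
    have hmono2 : μ * (∫ x in (0:ℝ)..ℓ, (C * (px v τ x) ^ 2 + L * (px i τ x) ^ 2)) ≤
        ∫ x in (0:ℝ)..ℓ, (G * (px v τ x) ^ 2 + R * (px i τ x) ^ 2) := by
      rw [← intervalIntegral.integral_const_mul]
      apply intervalIntegral.integral_mono_on hℓ.le
        ((continuous_const.mul ((continuous_const.mul ((cVx τ).pow 2)).add
          (continuous_const.mul ((cIx τ).pow 2)))).intervalIntegrable 0 ℓ)
        (((continuous_const.mul ((cVx τ).pow 2)).add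
          (continuous_const.mul ((cIx τ).pow 2))).intervalIntegrable 0 ℓ)
      intro x hx
      have h1 := mul_le_mul_of_nonneg_right hμC (sq_nonneg (px v τ x))
      have h2 := mul_le_mul_of_nonneg_right hμL (sq_nonneg (px i τ x))
      simp only [sq] at h1 h2
      show μ * (C * px v τ x ^ 2 + L * px i τ x ^ 2) ≤ G * px v τ x ^ 2 + R * px i τ x ^ 2
      nlinarith [sq_nonneg (px v τ x), sq_nonneg (px i τ x)]
    have e1 := key1 τ hτ
    have e2 := key2 τ hτ
    rw [hDdef, hfdef]
    simp only
    rw [e1, e2]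
    linarith
  -- Gronwall
  set φ : ℝ → ℝ := fun s => f s * Real.exp (2 * μ * s) with hφdef
  have hφd : ∀ s, HasDerivAt φ ((D s + 2 * μ * f s) * Real.exp (2 * μ * s)) s := by
    intro s
    have h1 : HasDerivAt (fun x : ℝ => 2 * μ * x) (2 * μ * 1) s :=
      (hasDerivAt_id s).const_mul (2 * μ)
    have h2 := (hfd s).mul h1.exp
    exact h2.congr_deriv (by ring)
  have hφc : Continuous φ := by
    have : Differentiable ℝ φ := fun s => (hφd s).differentiableAt
    exact this.continuous
  have hanti : AntitoneOn φ (Set.Icc 0 T) := by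
    apply antitoneOn_of_deriv_nonpos (convex_Icc 0 T) hφc.continuousOn
    · exact fun s _ => ((hφd s).differentiableAt).differentiableWithinAt
    · intro s hs
      rw [interior_Icc] at hs
      rw [(hφd s).deriv]
      exact mul_nonpos_of_nonpos_of_nonneg (hKey s (Set.Ioo_subset_Icc_self hs))
        (Real.exp_pos _).le
  have hle : φ t ≤ φ 0 := hanti ⟨le_rfl, hT.le⟩ ht ht.1
  have hφ0 : φ 0 = f 0 := by rw [hφdef]; simp
  rw [hφ0] at hle
  -- conclude
  have hE : Real.exp (2 * μ * t) * Real.exp (-2 * μ * t) = 1 := by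
    rw [← Real.exp_add]
    norm_num
  have hfinal : f t ≤ f 0 * Real.exp (-2 * μ * t) := by
    have h3 := mul_le_mul_of_nonneg_right hle (Real.exp_pos (-2 * μ * t)).le
    calc f t = f t * (Real.exp (2 * μ * t) * Real.exp (-2 * μ * t)) := by rw [hE]; ring
    _ = f t * Real.exp (2 * μ * t) * Real.exp (-2 * μ * t) := by ring
    _ ≤ f 0 * Real.exp (-2 * μ * t) := h3
  exact hfinal
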